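/- arXiv:2206.14105 — 2 statements merged into one kernel-verified Lean document; each statement's English description precedes it below -/
import Mathlib

section
/- Let p̂ be a strictly positive probability distribution on a finite set A, and let π ∈ ℝ^{|A|} satisfy both ∑_α π_α √(p̂_α) = 0 and ∑_α π_α √(p̂_α) log p̂_α = 0. Define for t in a neighborhood of 0 the curve p(t)_α = p̂_α + t √(p̂_α) π_α (assumed to remain a probability vector). Then the function t ↦ H(p̂) − H(p(t)) has Taylor expansion (1/2) (∑_α π_α²) t² + O(t³) at t = 0; in particular its first derivative at 0 vanishes and its second derivative at 0 equals ∑_α π_α². -/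
open Filter Asymptotics

/-- Shannon entropy (convention `0 log 0 = 0`). -/
noncomputable def shannonEntropy {A : Type*} [Fintype A] (q : A → ℝ) : ℝ :=
  -∑ α, q α * Real.log (q α)

lemma log_quad_bound {x : ℝ} (hx : |x| ≤ 1/2) :
    |Real.log (1 + x) - (x - x^2/2)| ≤ 2 * |x|^3 := by
  have h1 : |(-x)| < 1 := by rw [abs_neg]; linarith
  have h := Real.abs_log_sub_add_sum_range_le h1 2
  simp only [Finset.sum_range_succ, Finset.sum_range_zero, zero_add, pow_one,
    Nat.cast_zero, Nat.cast_one, abs_neg] at h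
  have hden : (1:ℝ) - |x| ≥ 1/2 := by linarith
  have h2 : |Real.log (1 + x) - (x - x^2/2)| ≤ |x|^3 / (1 - |x|) := by
    have : -x / 1 + (-x)^2 / (1+1) + Real.log (1 - -x) = Real.log (1 + x) - (x - x^2/2) := by
      ring_nf
    rw [this] at h
    exact h
  calc |Real.log (1 + x) - (x - x^2/2)| ≤ |x|^3 / (1 - |x|) := h2
    _ ≤ |x|^3 / (1/2) := by
        apply div_le_div_of_nonneg_left (by positivity) (by norm_num) hden
    _ = 2 * |x|^3 := by ring

/-- Lemma on fluctuations: for a strictly positive probability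
distribution `p̂` and fluctuations `π` orthogonal to `√p̂` and to `√p̂ · log p̂`,
the entropy deficit along the curve `p(t)_α = p̂_α + t √(p̂_α) π_α` has the Taylor
expansion `(1/2)(∑ π²) t² + O(t³)`: its first derivative at `0` vanishes and its
second derivative at `0` equals `∑ π²`. -/
theorem entropy_fluctuation_quadratic
    {A : Type*} [Fintype A]
    (phat : A → ℝ) (hpos : ∀ α, 0 < phat α) (hsum : ∑ α, phat α = 1)
    (π : A → ℝ)
    (horth1 : ∑ α, π α * Real.sqrt (phat α) = 0)
    (horth2 : ∑ α, π α * Real.sqrt (phat α) * Real.log (phat α) = 0)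
    (p : ℝ → A → ℝ)
    (hp : ∀ t α, p t α = phat α + t * Real.sqrt (phat α) * π α)
    (hprob : ∃ ε > 0, ∀ t : ℝ, |t| < ε → ∀ α, 0 < p t α) :
    (fun t => (shannonEntropy phat - shannonEntropy (p t))
        - (1 / 2) * (∑ α, (π α) ^ 2) * t ^ 2) =O[nhds 0] (fun t => |t| ^ 3) ∧
    deriv (fun t => shannonEntropy phat - shannonEntropy (p t)) 0 = 0 ∧
    deriv (deriv (fun t => shannonEntropy phat - shannonEntropy (p t))) 0
      = ∑ α, (π α) ^ 2 := by
  classical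
  obtain ⟨ε, hε, hprob⟩ := hprob
  set c : A → ℝ := fun α => Real.sqrt (phat α) * π α with hc
  have hc2 : ∀ α, c α ^ 2 = phat α * π α ^ 2 := by
    intro α
    have := Real.sq_sqrt (hpos α).le
    simp only [hc]
    nlinarith [this]
  have hsumc : ∑ α, c α = 0 := by
    rw [← horth1]; exact Finset.sum_congr rfl fun α _ => mul_comm _ _
  have hsumclog : ∑ α, c α * Real.log (phat α) = 0 := by
    rw [← horth2]; exact Finset.sum_congr rfl fun α _ => by ring
  have hpα : ∀ t α, p t α = phat α + t * c α := by
    intro t α; rw [hp]; simp only [hc]; ring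
  have hf : ∀ t, shannonEntropy phat - shannonEntropy (p t)
      = ∑ α, ((phat α + t * c α) * Real.log (phat α + t * c α)
                        - phat α * Real.log (phat α)) := by
    intro t
    simp only [shannonEntropy, hpα, Finset.sum_sub_distrib]
    ring
  clear_value c
  refine ⟨?_, ?_, ?_⟩
  · -- isBigO part
    set u : A → ℝ := fun α => c α / phat α with hu
    have huc : ∀ α, phat α * u α = c α := by
      intro α; simp only [hu]
      rw [mul_div_cancel₀ _ (hpos α).ne']
    have hcu : ∀ α, c α * u α = π α ^ 2 := by
      intro α
      simp only [hu]
      rw [show c α * (c α / phat α) = c α ^ 2 / phat α by ring, hc2 α,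
        mul_div_cancel_left₀ _ (hpos α).ne']
    clear_value u
    set r : A → ℝ → ℝ := fun α t => Real.log (1 + t * u α) - (t * u α - (t * u α)^2/2) with hr
    set R : A → ℝ → ℝ :=
      fun α t => -(t^3) * (c α * u α ^ 2)/2 + (phat α + t * c α) * r α t with hR
    set B : ℝ := ∑ α, |u α| with hB
    have hBnn : 0 ≤ B := Finset.sum_nonneg fun α _ => abs_nonneg _
    have huB : ∀ α, |u α| ≤ B :=
      fun α => Finset.single_le_sum (fun β _ => abs_nonneg (u β)) (Finset.mem_univ α)
    set δ : ℝ := min 1 (1/(2*(B+1))) with hδ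
    have hδpos : 0 < δ := lt_min one_pos (by positivity)
    have hsmall : ∀ t : ℝ, |t| ≤ δ → ∀ α, |t * u α| ≤ 1/2 := by
      intro t ht α
      rw [abs_mul]
      have h1 : |t| ≤ 1/(2*(B+1)) := le_trans ht (min_le_right _ _)
      calc |t| * |u α| ≤ (1/(2*(B+1))) * B :=
            mul_le_mul h1 (huB α) (abs_nonneg _) (by positivity)
        _ ≤ 1/2 := by
            rw [div_mul_eq_mul_div, one_mul, div_le_div_iff₀ (by positivity) (by norm_num)]
            nlinarith
    have hid : ∀ t : ℝ, (∀ α, |t * u α| ≤ 1/2) →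
        (shannonEntropy phat - shannonEntropy (p t)) - (1/2) * (∑ α, (π α)^2) * t^2
        = ∑ α, R α t := by
      intro t ht
      have hterm : ∀ α ∈ Finset.univ,
          (phat α + t * c α) * Real.log (phat α + t * c α) - phat α * Real.log (phat α)
          = t * c α * Real.log (phat α) + t * c α + t^2 * (π α)^2/2 + R α t := by
        intro α _
        have ha := hpos α
        have h1x : 0 < 1 + t * u α := by
          have := abs_le.mp (ht α)
          linarith [this.1]
        have hfac : phat α + t * c α = phat α * (1 + t * u α) := by
          linear_combination (-t) * huc α
        have hlog : Real.log (phat α + t * c α)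
            = Real.log (phat α) + Real.log (1 + t * u α) := by
          rw [hfac, Real.log_mul ha.ne' h1x.ne']
        have hrdef : Real.log (1 + t * u α) = (t * u α - (t * u α)^2/2) + r α t := by
          simp only [hr]; ring
        have hmain : (phat α + t * c α) * (t * u α - (t * u α)^2/2)
            = t * c α + t^2 * (c α * u α)/2 - t^3 * (c α * u α^2)/2 := by
          linear_combination (t - t^2 * u α / 2) * huc α
        rw [hlog, hrdef]
        simp only [hR]
        linear_combination hmain + (t^2/2) * hcu α
      rw [hf t, Finset.sum_congr rfl hterm, Finset.sum_add_distrib,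
        Finset.sum_add_distrib, Finset.sum_add_distrib]
      have e1 : ∑ α, t * c α * Real.log (phat α) = 0 := by
        have : ∑ α, t * c α * Real.log (phat α)
            = t * ∑ α, c α * Real.log (phat α) := by
          rw [Finset.mul_sum]; exact Finset.sum_congr rfl fun α _ => by ring
        rw [this, hsumclog, mul_zero]
      have e2 : ∑ α : A, t * c α = 0 := by
        rw [← Finset.mul_sum, hsumc, mul_zero]
      have e3 : ∑ α, t^2 * (π α)^2/2 = (1/2) * (∑ α, (π α)^2) * t^2 := by
        rw [Finset.mul_sum, Finset.sum_mul]
        exact Finset.sum_congr rfl fun α _ => by ring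
      rw [e1, e2, e3]
      ring
    set C : ℝ := ∑ α, (|c α| * u α^2/2 + 2 * (phat α + |c α|) * |u α|^3) with hC
    rw [isBigO_iff]
    refine ⟨C, ?_⟩
    filter_upwards [Metric.ball_mem_nhds (0:ℝ) hδpos] with t ht
    rw [Metric.mem_ball, Real.dist_eq, sub_zero] at ht
    have ht' : |t| ≤ δ := ht.le
    have ht1 : |t| ≤ 1 := ht'.trans (min_le_left _ _)
    have hsm := hsmall t ht'
    rw [Real.norm_eq_abs, Real.norm_eq_abs, hid t hsm,
      abs_of_nonneg (a := |t|^3) (by positivity)]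
    calc |∑ α, R α t| ≤ ∑ α, |R α t| := Finset.abs_sum_le_sum_abs _ _
      _ ≤ ∑ α, (|c α| * u α^2/2 + 2 * (phat α + |c α|) * |u α|^3) * |t|^3 := by
          apply Finset.sum_le_sum
          intro α _
          have ha := hpos α
          have hXeq : |(-(t^3) * (c α * u α ^ 2)/2)| = |t|^3 * (|c α| * u α^2)/2 := by
            rw [show (-(t^3) * (c α * u α ^ 2)/2) = -(t^3 * (c α * u α^2)/2) by ring,
              abs_neg, abs_div, abs_mul, abs_pow, abs_mul, abs_pow, sq_abs, abs_two]
          have hfacle : |phat α + t * c α| ≤ phat α + |c α| := by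
            calc |phat α + t * c α| ≤ |phat α| + |t * c α| := abs_add_le _ _
              _ = phat α + |t| * |c α| := by rw [abs_of_pos ha, abs_mul]
              _ ≤ phat α + 1 * |c α| := by
                  have := mul_le_mul_of_nonneg_right ht1 (abs_nonneg (c α))
                  linarith
              _ = phat α + |c α| := by ring
          have hrle : |r α t| ≤ 2 * (|t|^3 * |u α|^3) := by
            have := log_quad_bound (hsm α)
            calc |r α t| ≤ 2 * |t * u α|^3 := this
              _ = 2 * (|t|^3 * |u α|^3) := by rw [abs_mul]; ring
          have hYle : |(phat α + t * c α) * r α t|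
              ≤ (phat α + |c α|) * (2 * (|t|^3 * |u α|^3)) := by
            rw [abs_mul]
            exact mul_le_mul hfacle hrle (abs_nonneg _) (by positivity)
          calc |R α t| ≤ |(-(t^3) * (c α * u α ^ 2)/2)| + |(phat α + t * c α) * r α t| := by
                simp only [hR]; exact abs_add_le _ _
            _ ≤ |t|^3 * (|c α| * u α^2)/2 + (phat α + |c α|) * (2 * (|t|^3 * |u α|^3)) :=
                add_le_add (le_of_eq hXeq) hYle
            _ = (|c α| * u α^2/2 + 2 * (phat α + |c α|) * |u α|^3) * |t|^3 := by ring
      _ = C * |t|^3 := by rw [hC, Finset.sum_mul]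
  · -- first derivative
    have hderiv0 : HasDerivAt (fun t => shannonEntropy phat - shannonEntropy (p t))
        (∑ α, c α * (Real.log (phat α + 0 * c α) + 1)) 0 := by
      have hfe : (fun t => shannonEntropy phat - shannonEntropy (p t))
          = fun t => ∑ α, ((phat α + t * c α) * Real.log (phat α + t * c α)
              - phat α * Real.log (phat α)) := funext hf
      rw [hfe]
      apply HasDerivAt.fun_sum
      intro α _
      have hx : 0 < phat α + 0 * c α := by
        rw [← hpα]; exact hprob 0 (by simpa using hε) α
      have h1 : HasDerivAt (fun s : ℝ => phat α + s * c α) (c α) 0 := by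
        simpa using ((hasDerivAt_id (0:ℝ)).mul_const (c α)).const_add (phat α)
      have h2 := (Real.hasDerivAt_mul_log hx.ne').comp 0 h1
      have h3 : (Real.log (phat α + 0 * c α) + 1) * c α
          = c α * (Real.log (phat α + 0 * c α) + 1) := mul_comm _ _
      exact (h3 ▸ h2).sub_const _
    rw [hderiv0.deriv]
    simp only [zero_mul, add_zero, mul_add, mul_one, Finset.sum_add_distrib,
      hsumclog, hsumc, add_zero]
  · -- second derivative
    set G : ℝ → ℝ := fun t => ∑ α, c α * (Real.log (phat α + t * c α) + 1) with hG
    have hderiv : ∀ t : ℝ, |t| < ε →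
        HasDerivAt (fun t => shannonEntropy phat - shannonEntropy (p t)) (G t) t := by
      intro t ht
      have hfe : (fun t => shannonEntropy phat - shannonEntropy (p t))
          = fun t => ∑ α, ((phat α + t * c α) * Real.log (phat α + t * c α)
              - phat α * Real.log (phat α)) := funext hf
      rw [hfe]
      apply HasDerivAt.fun_sum
      intro α _
      have hx : 0 < phat α + t * c α := by rw [← hpα]; exact hprob t ht α
      have h1 : HasDerivAt (fun s : ℝ => phat α + s * c α) (c α) t := by
        simpa using ((hasDerivAt_id t).mul_const (c α)).const_add (phat α)
      have h2 := (Real.hasDerivAt_mul_log hx.ne').comp t h1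
      have h3 : (Real.log (phat α + t * c α) + 1) * c α
          = c α * (Real.log (phat α + t * c α) + 1) := mul_comm _ _
      exact (h3 ▸ h2).sub_const _
    have heq : deriv (fun t => shannonEntropy phat - shannonEntropy (p t)) =ᶠ[nhds 0] G := by
      filter_upwards [Metric.ball_mem_nhds (0:ℝ) hε] with t ht
      rw [Metric.mem_ball, Real.dist_eq, sub_zero] at ht
      exact (hderiv t ht).deriv
    rw [heq.deriv_eq]
    have hGd : HasDerivAt G (∑ α, (π α)^2) 0 := by
      apply HasDerivAt.fun_sum
      intro α _
      have h1 : HasDerivAt (fun s : ℝ => phat α + s * c α) (c α) 0 := by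
        simpa using ((hasDerivAt_id (0:ℝ)).mul_const (c α)).const_add (phat α)
      have hx : phat α + 0 * c α ≠ 0 := by simpa using (hpos α).ne'
      have h2 := (Real.hasDerivAt_log hx).comp 0 h1
      have h3 := (h2.add_const 1).const_mul (c α)
      have h4 : c α * ((phat α + 0 * c α)⁻¹ * c α) = π α ^ 2 := by
        rw [zero_mul, add_zero,
          show c α * ((phat α)⁻¹ * c α) = c α ^ 2 * (phat α)⁻¹ by ring, hc2 α]
        field_simp
        exact mul_div_cancel_left₀ _ (hpos α).ne'
      rw [h4] at h3
      exact h3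
    exact hGd.deriv
end

section
/- For a sequence p^(N) of probability distributions on a finite set A with N p^(N)_α ∈ ℕ for all α and p^(N) → p with p_α > 0 for all α, the multinomial coefficient W[N p^(N)] = N! / ∏_α (N p^(N)_α)! satisfies log W[N p^(N)] = N H(p^(N)) − ((|A|−1)/2) log N + O(1) as N → ∞, where H is Shannon entropy. -/
open Filter Asymptotics

/-- Stirling error term -/
noncomputable def stirErr (n : ℕ) : ℝ :=
  Real.log n.factorial - ((n : ℝ) * Real.log n - n + (1/2) * Real.log n)

lemma stirErr_eq (n : ℕ) (hn : 1 ≤ n) :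
    stirErr n = Real.log (Stirling.stirlingSeq n) + (1/2) * Real.log 2 := by
  have hn' : (0:ℝ) < n := by exact_mod_cast hn
  rw [Stirling.log_stirlingSeq_formula, stirErr]
  rw [Real.log_mul (by norm_num) (ne_of_gt hn'), Real.log_div (ne_of_gt hn') (Real.exp_ne_zero 1),
    Real.log_exp]
  ring

lemma tendsto_stirErr : Tendsto stirErr atTop (nhds (Real.log (Real.sqrt Real.pi) + (1/2) * Real.log 2)) := by
  have h1 : Tendsto (fun n => Real.log (Stirling.stirlingSeq n) + (1/2) * Real.log 2) atTop
      (nhds (Real.log (Real.sqrt Real.pi) + (1/2) * Real.log 2)) := by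
    refine Tendsto.add_const _ (Filter.Tendsto.log Stirling.tendsto_stirlingSeq_sqrt_pi ?_)
    positivity
  refine h1.congr' ?_
  filter_upwards [eventually_ge_atTop 1] with n hn
  exact (stirErr_eq n hn).symm

/-- For a sequence of empirical distributions `p^(N)_α = c_N(α)/N`
with integer counts `c_N` summing to `N`, converging to a strictly positive limit
`p`, the multinomial coefficient `W[N p^(N)] = N! / ∏_α (N p^(N)_α)!` satisfies
`log W[N p^(N)] = N H(p^(N)) − ((|A|−1)/2) log N + O(1)` as `N → ∞`. -/
theorem multinomial_coefficient_large_N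
    {A : Type*} [Fintype A]
    (c : ℕ → A → ℕ) (hc : ∀ N, ∑ α, c N α = N)
    (p : ℕ → A → ℝ) (hp : ∀ N α, p N α = (c N α : ℝ) / (N : ℝ))
    (plim : A → ℝ) (hpos : ∀ α, 0 < plim α)
    (hlim : ∀ α, Tendsto (fun N => p N α) atTop (nhds (plim α))) :
    (fun N : ℕ =>
        Real.log ((N.factorial : ℝ) / ∏ α, ((c N α).factorial : ℝ))
          - ((N : ℝ) * shannonEntropy (p N)
              - ((Fintype.card A - 1 : ℝ) / 2) * Real.log (N : ℝ)))
      =O[atTop] (fun _ => (1 : ℝ)) := by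
  -- each count tends to infinity
  have hcast : ∀ α, Tendsto (fun N => ((c N α : ℝ))) atTop atTop := by
    intro α
    have : Tendsto (fun N : ℕ => p N α * N) atTop atTop :=
      Tendsto.pos_mul_atTop (hpos α) (hlim α) tendsto_natCast_atTop_atTop
    refine this.congr' ?_
    filter_upwards [eventually_ge_atTop 1] with N hN
    have hN' : (N:ℝ) ≠ 0 := by positivity
    rw [hp]; field_simp
  have hcN : ∀ α, Tendsto (fun N => c N α) atTop atTop := by
    intro α; exact tendsto_natCast_atTop_iff.mp (hcast α)
  -- eventually all counts are ≥ 1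
  have hev : ∀ᶠ N : ℕ in atTop, (1 ≤ N ∧ ∀ α, 1 ≤ c N α) := by
    refine (eventually_ge_atTop 1).and ?_
    rw [eventually_all]
    intro α; exact (hcN α).eventually_ge_atTop 1
  -- the target tends to a finite limit
  set L : ℝ := Real.log (Real.sqrt Real.pi) + (1/2) * Real.log 2 with hL
  have key : Tendsto (fun N : ℕ =>
        Real.log ((N.factorial : ℝ) / ∏ α, ((c N α).factorial : ℝ))
          - ((N : ℝ) * shannonEntropy (p N)
              - ((Fintype.card A - 1 : ℝ) / 2) * Real.log (N : ℝ)))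
      atTop (nhds (L - (∑ _α : A, L) - (1/2) * ∑ α, Real.log (plim α))) := by
    have h1 : Tendsto (fun N : ℕ =>
        stirErr N - (∑ α, stirErr (c N α)) - (1/2) * ∑ α, Real.log (p N α))
        atTop (nhds (L - (∑ _α : A, L) - (1/2) * ∑ α, Real.log (plim α))) := by
      refine Tendsto.sub (Tendsto.sub (tendsto_stirErr.comp tendsto_id) ?_) ?_
      · exact tendsto_finset_sum _ fun α _ => tendsto_stirErr.comp (hcN α)
      · exact Tendsto.const_mul _ (tendsto_finset_sum _ fun α _ =>
          (hlim α).log (ne_of_gt (hpos α)))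
    refine h1.congr' ?_
    filter_upwards [hev] with N hN
    obtain ⟨hN1, hc1⟩ := hN
    have hNpos : (0:ℝ) < N := by exact_mod_cast hN1
    have hcpos : ∀ α, (0:ℝ) < c N α := fun α => by exact_mod_cast hc1 α
    -- entropy computation
    have hsum : (∑ α, (c N α : ℝ)) = (N : ℝ) := by exact_mod_cast congrArg Nat.cast (hc N)
    have hH : (N : ℝ) * shannonEntropy (p N)
        = (N : ℝ) * Real.log N - ∑ α, (c N α : ℝ) * Real.log (c N α) := by
      rw [shannonEntropy, mul_neg, Finset.mul_sum]
      have : ∀ α ∈ Finset.univ, (N:ℝ) * (p N α * Real.log (p N α))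
          = (c N α : ℝ) * Real.log (c N α) - (c N α : ℝ) * Real.log N := by
        intro α _
        rw [hp, Real.log_div (ne_of_gt (hcpos α)) (ne_of_gt hNpos)]
        field_simp
      rw [Finset.sum_congr rfl this, Finset.sum_sub_distrib, ← Finset.sum_mul, hsum]
      ring
    -- log of quotient
    have hprodne : (∏ α, ((c N α).factorial : ℝ)) ≠ 0 := by
      apply Finset.prod_ne_zero_iff.mpr
      intro α _; exact_mod_cast (Nat.factorial_ne_zero _)
    have hlogdiv : Real.log ((N.factorial : ℝ) / ∏ α, ((c N α).factorial : ℝ))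
        = Real.log N.factorial - ∑ α, Real.log ((c N α).factorial : ℝ) := by
      rw [Real.log_div (by exact_mod_cast Nat.factorial_ne_zero N) hprodne,
        Real.log_prod]
      intro α _; exact_mod_cast (Nat.factorial_ne_zero _)
    have hlogp : ∀ α ∈ Finset.univ, Real.log (p N α) = Real.log (c N α) - Real.log N := by
      intro α _
      rw [hp, Real.log_div (ne_of_gt (hcpos α)) (ne_of_gt hNpos)]
    -- now expand everything
    rw [hlogdiv, hH, Finset.sum_congr rfl hlogp]
    simp only [stirErr, sub_eq_add_neg, neg_add, neg_neg, Finset.mul_sum, Finset.sum_add_distrib,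
      Finset.sum_neg_distrib, hsum, Finset.sum_const, Finset.card_univ, nsmul_eq_mul]
    have h2 : ∑ x : A, 1/2 * Real.log ((c N x : ℝ)) = (∑ x : A, Real.log ((c N x : ℝ))) * (1/2) := by
      rw [Finset.sum_mul]; exact Finset.sum_congr rfl (fun x _ => by ring)
    rw [h2]; ring
  exact key.isBigO_one ℝ
end
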